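/- Let P be a lattice triangle with boundary lattice points (0,0),(1,0),...,(b-2,0) and (c,d) with d > 0, where b ≥ 6 and P has i ≥ 3 interior lattice points. Then d = 2i/(b-2) + 1 is an integer ≥ 2, and at least one of the two subtriangles P' with vertices (0,0), (b-3,0), (c,d) and P'' with vertices (1,0), (b-2,0), (c,d) has at least one interior lattice point, at least 5 boundary lattice points, and normalized area (b-3)d ≥ 7. -/

import Mathlib

noncomputable section

/-- The inclusion of the lattice `ℤ²` into `ℝ²`. -/
def latticeEmbed : ℤ × ℤ → ℝ × ℝ := fun p => ((p.1 : ℝ), (p.2 : ℝ))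

/-- The closed triangle in `ℝ²` with the given lattice vertices. -/
def triZ (u v w : ℤ × ℤ) : Set (ℝ × ℝ) :=
  convexHull ℝ {latticeEmbed u, latticeEmbed v, latticeEmbed w}

namespace Stmt18

open Set MeasureTheory Pointwise ENNReal

section RealTri

def tri (a B c d : ℝ) : Set (ℝ × ℝ) := convexHull ℝ {((a,0) : ℝ × ℝ), (a+B, 0), (c, d)}

variable {a B c d : ℝ}

lemma isClosed_tri : IsClosed (tri a B c d) :=
  ((((Set.finite_singleton _).insert _).insert _).isCompact_convexHull ℝ).isClosed

lemma mem_tri (hB : 0 < B) (hd : 0 < d) (p : ℝ × ℝ) :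
    p ∈ tri a B c d ↔ 0 ≤ p.2 ∧ (c-a)*p.2 ≤ d*(p.1-a) ∧
      d*(p.1-a) ≤ B*(d-p.2) + (c-a)*p.2 := by
  constructor
  · intro hp
    have hconv : Convex ℝ {p : ℝ × ℝ | 0 ≤ p.2 ∧ (c-a)*p.2 ≤ d*(p.1-a) ∧
        d*(p.1-a) ≤ B*(d-p.2) + (c-a)*p.2} := by
      intro x hx y hy s t hs ht hst
      simp only [mem_setOf_eq] at hx hy ⊢
      obtain ⟨hx1, hx2, hx3⟩ := hx
      obtain ⟨hy1, hy2, hy3⟩ := hy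
      have e1 : (s • x + t • y).1 = s * x.1 + t * y.1 := rfl
      have e2 : (s • x + t • y).2 = s * x.2 + t * y.2 := rfl
      rw [e1, e2]
      have ea : d*(s*x.1+t*y.1-a) = s*(d*(x.1-a)) + t*(d*(y.1-a)) := by
        linear_combination (d*a)*hst
      have eb : (c-a)*(s*x.2+t*y.2) = s*((c-a)*x.2) + t*((c-a)*y.2) := by ring
      have ec : B*(d-(s*x.2+t*y.2)) + (c-a)*(s*x.2+t*y.2)
          = s*(B*(d-x.2)+(c-a)*x.2) + t*(B*(d-y.2)+(c-a)*y.2) := by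
        linear_combination (-(B*d))*hst
      refine ⟨by nlinarith, ?_, ?_⟩
      · rw [ea, eb]
        exact add_le_add (mul_le_mul_of_nonneg_left hx2 hs) (mul_le_mul_of_nonneg_left hy2 ht)
      · rw [ea, ec]
        exact add_le_add (mul_le_mul_of_nonneg_left hx3 hs) (mul_le_mul_of_nonneg_left hy3 ht)
    have hsub : ({((a,0) : ℝ × ℝ), (a+B, 0), (c, d)} : Set (ℝ × ℝ)) ⊆
        {p : ℝ × ℝ | 0 ≤ p.2 ∧ (c-a)*p.2 ≤ d*(p.1-a) ∧
          d*(p.1-a) ≤ B*(d-p.2) + (c-a)*p.2} := by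
      rintro q hq
      simp only [mem_insert_iff, mem_singleton_iff] at hq
      rcases hq with rfl | rfl | rfl <;> refine ⟨?_, ?_, ?_⟩ <;> simp <;> nlinarith
    exact convexHull_min hsub hconv hp
  · rintro ⟨h1, h2, h3⟩
    have hdB : 0 < d * B := mul_pos hd hB
    set w : Fin 3 → ℝ := ![(B*(d-p.2) + (c-a)*p.2 - d*(p.1-a))/(d*B),
      (d*(p.1-a) - (c-a)*p.2)/(d*B), p.2/d] with hw
    set z : Fin 3 → ℝ × ℝ := ![(a,0), (a+B,0), (c,d)] with hz
    have hw0 : ∀ i ∈ Finset.univ, 0 ≤ w i := by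
      intro i _
      fin_cases i
      · exact div_nonneg (by simp; nlinarith) hdB.le
      · exact div_nonneg (by simp; nlinarith) hdB.le
      · exact div_nonneg (by simpa using h1) hd.le
    have hsum : ∑ i, w i = 1 := by
      simp [hw, Fin.sum_univ_three]
      field_simp
      ring
    have hmem : ∀ i ∈ Finset.univ, z i ∈ ({((a,0) : ℝ × ℝ), (a+B, 0), (c, d)} : Set (ℝ × ℝ)) := by
      intro i _
      fin_cases i <;> simp [hz]
    have hcm := Finset.centerMass_mem_convexHull Finset.univ hw0 (by rw [hsum]; norm_num) hmem
    have : Finset.univ.centerMass w z = p := by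
      rw [Finset.centerMass_eq_of_sum_1 _ _ hsum]
      simp [hw, hz, Fin.sum_univ_three, Prod.ext_iff, Prod.smul_mk]
      constructor
      · field_simp
        ring
      · field_simp
    rwa [this] at hcm


lemma mem_interior_tri (hB : 0 < B) (hd : 0 < d) (p : ℝ × ℝ) :
    p ∈ interior (tri a B c d) ↔ 0 < p.2 ∧ (c-a)*p.2 < d*(p.1-a) ∧
      d*(p.1-a) < B*(d-p.2) + (c-a)*p.2 := by
  constructor
  · intro hp
    obtain ⟨h1, h2, h3⟩ := (mem_tri hB hd p).1 (interior_subset hp)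
    obtain ⟨ε, hε, hball⟩ := Metric.mem_nhds_iff.1 (mem_interior_iff_mem_nhds.1 hp)
    have key : ∀ w : ℝ × ℝ, ‖w‖ ≤ 1 → p + (ε/2) • w ∈ tri a B c d := by
      intro w hw
      apply hball
      rw [Metric.mem_ball, dist_eq_norm]
      have e : p + (ε/2) • w - p = (ε/2) • w := by abel
      rw [e, norm_smul]
      calc ‖(ε/2 : ℝ)‖ * ‖w‖ ≤ ‖(ε/2 : ℝ)‖ * 1 := by
              exact mul_le_mul_of_nonneg_left hw (norm_nonneg _)
        _ = ε / 2 := by rw [mul_one, Real.norm_eq_abs, abs_of_pos (by linarith)]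
        _ < ε := by linarith
    refine ⟨?_, ?_, ?_⟩
    · rcases lt_or_eq_of_le h1 with h | h
      · exact h
      · exfalso
        have hq := (mem_tri hB hd _).1 (key ((0 : ℝ), (-1 : ℝ)) (by
          simp [Prod.norm_def]))
        have e2 : (p + (ε/2) • ((0 : ℝ), (-1 : ℝ))).2 = p.2 - ε/2 := by
          simp; ring
        rw [e2] at hq
        have := hq.1
        nlinarith
    · rcases lt_or_eq_of_le h2 with h | h
      · exact h
      · exfalso
        have hq := (mem_tri hB hd _).1 (key ((-1 : ℝ), (0 : ℝ)) (by
          simp [Prod.norm_def]))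
        have e1 : (p + (ε/2) • ((-1 : ℝ), (0 : ℝ))).1 = p.1 - ε/2 := by
          simp; ring
        have e2 : (p + (ε/2) • ((-1 : ℝ), (0 : ℝ))).2 = p.2 := by simp
        rw [e1, e2] at hq
        have := hq.2.1
        nlinarith
    · rcases lt_or_eq_of_le h3 with h | h
      · exact h
      · exfalso
        have hq := (mem_tri hB hd _).1 (key ((1 : ℝ), (0 : ℝ)) (by
          simp [Prod.norm_def]))
        have e1 : (p + (ε/2) • ((1 : ℝ), (0 : ℝ))).1 = p.1 + ε/2 := by
          simp
        have e2 : (p + (ε/2) • ((1 : ℝ), (0 : ℝ))).2 = p.2 := by simp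
        rw [e1, e2] at hq
        have := hq.2.2
        nlinarith
  · intro hp
    have hopen : IsOpen {p : ℝ × ℝ | 0 < p.2 ∧ (c-a)*p.2 < d*(p.1-a) ∧
        d*(p.1-a) < B*(d-p.2) + (c-a)*p.2} := by
      refine IsOpen.inter (isOpen_lt continuous_const continuous_snd) ?_
      refine IsOpen.inter (isOpen_lt (show Continuous fun p : ℝ × ℝ => (c-a)*p.2 by fun_prop)
        (show Continuous fun p : ℝ × ℝ => d*(p.1-a) by fun_prop)) ?_
      exact isOpen_lt (show Continuous fun p : ℝ × ℝ => d*(p.1-a) by fun_prop)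
        (show Continuous fun p : ℝ × ℝ => B*(d-p.2) + (c-a)*p.2 by fun_prop)
    have hsub : {p : ℝ × ℝ | 0 < p.2 ∧ (c-a)*p.2 < d*(p.1-a) ∧
        d*(p.1-a) < B*(d-p.2) + (c-a)*p.2} ⊆ tri a B c d := by
      intro q hq
      exact (mem_tri hB hd q).2 ⟨hq.1.le, hq.2.1.le, hq.2.2.le⟩
    exact hopen.subset_interior_iff.2 hsub hp

lemma frontier_tri : frontier (tri a B c d) = tri a B c d \ interior (tri a B c d) :=
  isClosed_tri.frontier_eq


instance : Measure.IsAddHaarMeasure (volume : Measure (ℝ × ℝ)) :=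
  inferInstanceAs (Measure.IsAddHaarMeasure ((volume : Measure ℝ).prod volume))

def mkL (p q r s : ℝ) : ℝ × ℝ →ₗ[ℝ] ℝ × ℝ :=
  Matrix.toLin (Module.Basis.finTwoProd ℝ) (Module.Basis.finTwoProd ℝ) !![p, q; r, s]

lemma mkL_apply (p q r s : ℝ) (v : ℝ × ℝ) :
    mkL p q r s v = (p * v.1 + q * v.2, r * v.1 + s * v.2) := by
  have hv : v = v.1 • Module.Basis.finTwoProd ℝ 0 + v.2 • Module.Basis.finTwoProd ℝ 1 := by
    simp [Module.Basis.finTwoProd_zero, Module.Basis.finTwoProd_one, Prod.ext_iff]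
  rw [hv, map_add, _root_.map_smul, _root_.map_smul]
  rw [mkL, Matrix.toLin_self, Matrix.toLin_self]
  simp [Fin.sum_univ_two, Module.Basis.finTwoProd_zero, Module.Basis.finTwoProd_one, Prod.ext_iff]
  constructor <;> ring

lemma mkL_det (p q r s : ℝ) : LinearMap.det (mkL p q r s) = p * s - q * r := by
  rw [mkL, LinearMap.det_toLin, Matrix.det_fin_two_of]

lemma tri_std_eq : tri 0 1 0 1 = {p : ℝ × ℝ | 0 ≤ p.2 ∧ 0 ≤ p.1 ∧ p.1 + p.2 ≤ 1} := by
  ext p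
  rw [mem_tri one_pos one_pos]
  constructor <;> rintro ⟨h1, h2, h3⟩ <;> exact ⟨by linarith, by linarith, by linarith⟩

def flipT : Set (ℝ × ℝ) := {p | p.1 ≤ 1 ∧ p.2 ≤ 1 ∧ 1 ≤ p.1 + p.2}

lemma flip_eq : ((1,1) : ℝ × ℝ) +ᵥ (mkL 0 (-1) (-1) 0 '' tri 0 1 0 1) = flipT := by
  ext p
  simp only [Set.mem_vadd_set, mem_image, tri_std_eq, mem_setOf_eq, mkL_apply, flipT]
  constructor
  · rintro ⟨y, ⟨q, ⟨h1, h2, h3⟩, rfl⟩, rfl⟩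
    refine ⟨?_, ?_, ?_⟩ <;> simp [Prod.ext_iff] <;> linarith
  · rintro ⟨h1, h2, h3⟩
    refine ⟨_, ⟨((1 - p.2), (1 - p.1)), ⟨by simp; linarith, by simp; linarith, by simp; linarith⟩, rfl⟩, ?_⟩
    apply Prod.ext <;> simp <;> ring

lemma isClosed_flipT : IsClosed flipT := by
  refine IsClosed.inter (isClosed_le continuous_fst continuous_const) ?_
  exact IsClosed.inter (isClosed_le continuous_snd continuous_const)
    (isClosed_le continuous_const (continuous_fst.add continuous_snd))

lemma volume_tri_std : volume (tri 0 1 0 1) = ENNReal.ofReal (1/2) := by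
  have hvol' : volume flipT = volume (tri 0 1 0 1) := by
    rw [← flip_eq, measure_vadd, Measure.addHaar_image_linearMap, mkL_det]
    norm_num
  have hunion : tri 0 1 0 1 ∪ flipT = Icc ((0 : ℝ), (0 : ℝ)) ((1 : ℝ), (1 : ℝ)) := by
    ext p
    simp only [tri_std_eq, flipT, mem_union, mem_setOf_eq, mem_Icc, Prod.le_def]
    constructor
    · rintro (⟨h1, h2, h3⟩ | ⟨h1, h2, h3⟩) <;>
        exact ⟨⟨by linarith, by linarith⟩, ⟨by linarith, by linarith⟩⟩
    · rintro ⟨⟨g1, g2⟩, ⟨g3, g4⟩⟩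
      rcases le_total (p.1 + p.2) 1 with h | h
      · exact Or.inl ⟨g2, g1, h⟩
      · exact Or.inr ⟨g3, g4, h⟩
  have hline : volume {p : ℝ × ℝ | p.1 + p.2 = 1} = 0 := by
    have heq : {p : ℝ × ℝ | p.1 + p.2 = 1} =
        ((1, 0) : ℝ × ℝ) +ᵥ (LinearMap.ker (LinearMap.fst ℝ ℝ ℝ + LinearMap.snd ℝ ℝ ℝ) :
          Set (ℝ × ℝ)) := by
      ext p
      simp only [mem_setOf_eq, Set.mem_vadd_set, SetLike.mem_coe, LinearMap.mem_ker,
        LinearMap.add_apply, LinearMap.fst_apply, LinearMap.snd_apply]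
      constructor
      · intro h
        exact ⟨(p.1 - 1, p.2), by simp; linarith, by apply Prod.ext <;> simp⟩
      · rintro ⟨q, hq, rfl⟩
        have : ((1, 0) : ℝ × ℝ) +ᵥ q = (1 + q.1, 0 + q.2) := by
          apply Prod.ext <;> simp
        rw [this]
        simp only [mem_setOf_eq]
        simp at hq ⊢
        linarith
    rw [heq, measure_vadd]
    refine Measure.addHaar_submodule volume _ ?_
    intro htop
    have : ((1, 0) : ℝ × ℝ) ∈ LinearMap.ker (LinearMap.fst ℝ ℝ ℝ + LinearMap.snd ℝ ℝ ℝ) := by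
      rw [htop]; trivial
    simp at this
  have hinter : volume (tri 0 1 0 1 ∩ flipT) = 0 := by
    refine measure_mono_null ?_ hline
    rintro p ⟨hp, hp'⟩
    rw [tri_std_eq] at hp
    obtain ⟨h1, h2, h3⟩ := hp
    obtain ⟨g1, g2, g3⟩ := hp'
    simp only [mem_setOf_eq]
    linarith
  have hsq : volume (Icc ((0 : ℝ), (0 : ℝ)) ((1 : ℝ), (1 : ℝ))) = 1 := by
    rw [Icc_prod_eq]
    rw [Measure.volume_eq_prod, Measure.prod_prod]
    simp [Real.volume_Icc]
  have hkey := measure_union_add_inter (μ := volume) (tri 0 1 0 1) isClosed_flipT.measurableSet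
  rw [hunion, hinter, hsq, add_zero, hvol'] at hkey
  have h2 : (2 : ℝ≥0∞) * volume (tri 0 1 0 1) = 1 := by rw [two_mul]; exact hkey.symm
  have : volume (tri 0 1 0 1) = 1 / 2 := by
    rw [← h2]
    rw [mul_comm, mul_div_assoc]
    rw [ENNReal.div_self (by norm_num) (by norm_num), mul_one]
  rw [this]
  rw [ENNReal.ofReal_div_of_pos (by norm_num)]
  norm_num

lemma volume_tri (hB : 0 < B) (hd : 0 < d) :
    volume (tri a B c d) = ENNReal.ofReal (B * d / 2) := by
  have himg : tri a B c d = ((a, 0) : ℝ × ℝ) +ᵥ (mkL B (c-a) 0 d '' tri 0 1 0 1) := by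
    ext p
    rw [mem_tri hB hd]
    simp only [Set.mem_vadd_set, mem_image, tri_std_eq, mem_setOf_eq, mkL_apply]
    have hdB : (0 : ℝ) < d * B := mul_pos hd hB
    constructor
    · rintro ⟨h1, h2, h3⟩
      refine ⟨_, ⟨((d*(p.1-a) - (c-a)*p.2)/(d*B), p.2/d), ⟨?_, ?_, ?_⟩, rfl⟩, ?_⟩
      · simp
        positivity
      · simp
        exact div_nonneg (by linarith) hdB.le
      · simp only
        rw [div_add_div _ _ (ne_of_gt hdB) (ne_of_gt hd), div_le_one (by positivity)]
        nlinarith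
      · apply Prod.ext
        · show a + _ = p.1
          simp only
          field_simp
          ring
        · show 0 + _ = p.2
          simp only
          field_simp
          ring
    · rintro ⟨y, ⟨q, ⟨h1, h2, h3⟩, rfl⟩, rfl⟩
      have e1 : (((a, 0) : ℝ × ℝ) +ᵥ (B * q.1 + (c-a) * q.2, 0 * q.1 + d * q.2)).1
          = a + B * q.1 + (c-a) * q.2 := by
        show a + _ = _; ring
      have e2 : (((a, 0) : ℝ × ℝ) +ᵥ (B * q.1 + (c-a) * q.2, 0 * q.1 + d * q.2)).2
          = d * q.2 := by
        show 0 + _ = _; ring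
      rw [e1, e2]
      refine ⟨by positivity, by nlinarith, by nlinarith⟩
  rw [himg, measure_vadd, Measure.addHaar_image_linearMap, mkL_det, volume_tri_std]
  rw [← ENNReal.ofReal_mul (by positivity)]
  congr 1
  rw [abs_of_pos (by nlinarith)]
  ring


end RealTri

section Lattice

variable {B c d : ℤ}

def latA (B c d : ℤ) : Set (ℤ × ℤ) :=
  {z | 0 < z.2 ∧ c * z.2 < d * z.1 ∧ d * z.1 < B * (d - z.2) + c * z.2}

def latS (B c d : ℤ) : Set (ℤ × ℤ) :=
  {z | 0 < z.2 ∧ z.2 < d ∧ c * z.2 < d * z.1 ∧ d * z.1 < c * z.2 + B * d}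

def phi (B c d : ℤ) (z : ℤ × ℤ) : ℤ × ℤ := (B + c - z.1, d - z.2)

lemma latA_subset_latS (hB : 0 < B) (hd : 0 < d) : latA B c d ⊆ latS B c d := by
  rintro ⟨x, y⟩ ⟨h1, h2, h3⟩
  simp only [latA, latS, mem_setOf_eq] at *
  have hyd : y < d := by nlinarith
  exact ⟨h1, hyd, h2, by nlinarith⟩

lemma phi_mem_latS (hd : 0 < d) {z : ℤ × ℤ} (hz : z ∈ latS B c d) :
    phi B c d z ∈ latS B c d := by
  obtain ⟨x, y⟩ := z
  obtain ⟨h1, h2, h3, h4⟩ := hz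
  refine ⟨by simp [phi]; linarith, by simp [phi]; linarith, ?_, ?_⟩
  · show c * (d - y) < d * (B + c - x)
    nlinarith
  · show d * (B + c - x) < c * (d - y) + B * d
    nlinarith

lemma phi_invol (z : ℤ × ℤ) : phi B c d (phi B c d z) = z := by
  simp [phi]

lemma phi_mem_latA_iff (hd : 0 < d)
    (D2 : ∀ x y : ℤ, 0 < y → y < d → d * x ≠ (c - B) * y)
    {z : ℤ × ℤ} (hz : z ∈ latS B c d) :
    phi B c d z ∈ latA B c d ↔ z ∉ latA B c d := by
  obtain ⟨x, y⟩ := z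
  obtain ⟨h1, h2, h3, h4⟩ := hz
  have hne : d * x ≠ B * (d - y) + c * y := by
    intro h
    exact D2 (x - B) y h1 h2 (by linarith [h]; )
  constructor
  · rintro ⟨g1, g2, g3⟩ ⟨k1, k2, k3⟩
    simp only [phi] at g2 g3
    nlinarith
  · intro hA
    have hgt : B * (d - y) + c * y < d * x := by
      rcases lt_trichotomy (d * x) (B * (d - y) + c * y) with h | h | h
      · exact absurd ⟨h1, h3, h⟩ hA
      · exact absurd h hne
      · exact h
    refine ⟨by simp [phi]; linarith, ?_, ?_⟩
    · show c * (d - y) < d * (B + c - x)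
      nlinarith
    · show d * (B + c - x) < B * (d - (d - y)) + c * (d - y)
      nlinarith

lemma ediv_lt_iff (hd : 0 < d) (u x : ℤ) : u / d < x ↔ u < d * x := by
  rw [← not_le, ← not_le, not_iff_not, Int.le_ediv_iff_mul_le hd, mul_comm]

def rowF (B c d : ℤ) : Finset (ℤ × ℤ) :=
  (Finset.Ioo 0 d).biUnion fun y =>
    (Finset.Ioc (c * y / d) (c * y / d + B)).image fun x => (x, y)

lemma latS_eq_rowF (hd : 0 < d)
    (D1 : ∀ x y : ℤ, 0 < y → y < d → d * x ≠ c * y) :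
    latS B c d = ↑(rowF B c d) := by
  ext ⟨x, y⟩
  simp only [latS, mem_setOf_eq, rowF, Finset.coe_biUnion, Finset.mem_coe,
    Finset.mem_biUnion, Finset.mem_Ioo, Finset.mem_image, Finset.mem_Ioc, mem_iUnion,
    Prod.mk.injEq]
  constructor
  · rintro ⟨h1, h2, h3, h4⟩
    refine ⟨y, ⟨h1, h2⟩, x, ⟨?_, ?_⟩, rfl, rfl⟩
    · rw [ediv_lt_iff hd]
      linarith
    · have hle : d * x ≤ c * y + B * d := le_of_lt h4
      have : x - B ≤ c * y / d := by
        rw [Int.le_ediv_iff_mul_le hd]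
        nlinarith [hle]
      linarith
  · rintro ⟨y', ⟨h1, h2⟩, x', ⟨g1, g2⟩, rfl, rfl⟩
    have hlt : c * y' < d * x' := by rw [← ediv_lt_iff hd]; linarith
    have hle : (x' - B) * d ≤ c * y' := by
      rw [← Int.le_ediv_iff_mul_le hd]
      linarith
    have hne : d * (x' - B) ≠ c * y' := fun h => D1 _ _ h1 h2 h
    refine ⟨h1, h2, hlt, ?_⟩
    rcases lt_or_eq_of_le hle with h | h
    · nlinarith
    · exact absurd (by linarith [h] : d * (x' - B) = c * y') hne

lemma card_rowF (hB : 0 < B) (hd : 0 < d) :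
    (rowF B c d).card = (d - 1).toNat * B.toNat := by
  rw [rowF, Finset.card_biUnion]
  · have hcard : ∀ y ∈ Finset.Ioo 0 d,
        ((Finset.Ioc (c * y / d) (c * y / d + B)).image fun x => (x, y)).card = B.toNat := by
      intro y _
      rw [Finset.card_image_of_injective _ (fun u v huv => (Prod.mk.injEq _ _ _ _ ▸ huv).1),
        Int.card_Ioc]
      congr 1
      ring
    rw [Finset.sum_congr rfl hcard, Finset.sum_const, Int.card_Ioo, smul_eq_mul]
    congr 1
    norm_num
  · intro u _ v _ huv
    simp only [Finset.disjoint_left, Finset.mem_image, Finset.mem_Ioc]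
    rintro z ⟨x, _, rfl⟩ ⟨x', _, h⟩
    exact huv (Prod.mk.injEq _ _ _ _ ▸ h).2.symm

lemma two_ncard_latA (hB : 0 < B) (hd : 0 < d)
    (D1 : ∀ x y : ℤ, 0 < y → y < d → d * x ≠ c * y)
    (D2 : ∀ x y : ℤ, 0 < y → y < d → d * x ≠ (c - B) * y) :
    2 * (latA B c d).ncard = (d - 1).toNat * B.toNat := by
  have hSF : latS B c d = ↑(rowF B c d) := latS_eq_rowF hd D1
  have hSfin : (latS B c d).Finite := by rw [hSF]; exact (rowF B c d).finite_toSet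
  have hAsub := latA_subset_latS hB hd (c := c)
  have hAfin : (latA B c d).Finite := hSfin.subset hAsub
  have hphiinj : Function.Injective (phi B c d) := by
    intro u v huv
    rw [← phi_invol (B := B) (c := c) (d := d) u, huv, phi_invol]
  have hunion : latS B c d = latA B c d ∪ phi B c d '' latA B c d := by
    apply Subset.antisymm
    · intro z hz
      by_cases hA : z ∈ latA B c d
      · exact Or.inl hA
      · right
        refine ⟨phi B c d z, ?_, phi_invol z⟩
        exact (phi_mem_latA_iff hd D2 hz).2 hA
    · rintro z (hz | ⟨w, hw, rfl⟩)
      · exact hAsub hz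
      · exact phi_mem_latS hd (hAsub hw)
  have hdisj : Disjoint (latA B c d) (phi B c d '' latA B c d) := by
    rw [disjoint_right]
    rintro z ⟨w, hw, rfl⟩ hz
    exact ((phi_mem_latA_iff hd D2 (hAsub hw)).1 hz) hw
  have := Set.ncard_union_eq hdisj hAfin (hAfin.image _)
  rw [← hunion, Set.ncard_image_of_injective _ hphiinj] at this
  rw [hSF, Set.ncard_coe_finset, card_rowF hB hd] at this
  omega



end Lattice

section Bridge

lemma triZ_eq (aZ e cZ dZ : ℤ) :
    triZ (aZ, 0) (e, 0) (cZ, dZ) = tri (aZ : ℝ) (((e - aZ : ℤ) : ℝ)) (cZ : ℝ) (dZ : ℝ) := by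
  have he : (aZ : ℝ) + ((e - aZ : ℤ) : ℝ) = (e : ℝ) := by push_cast; ring
  simp only [triZ, tri, latticeEmbed, he, Int.cast_zero]

lemma latmem_tri {aZ BZ cZ dZ : ℤ} (hB : 0 < BZ) (hd : 0 < dZ) (z : ℤ × ℤ) :
    latticeEmbed z ∈ tri (aZ : ℝ) (BZ : ℝ) (cZ : ℝ) (dZ : ℝ) ↔
      0 ≤ z.2 ∧ (cZ - aZ) * z.2 ≤ dZ * (z.1 - aZ) ∧
        dZ * (z.1 - aZ) ≤ BZ * (dZ - z.2) + (cZ - aZ) * z.2 := by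
  rw [mem_tri (by exact_mod_cast hB) (by exact_mod_cast hd)]
  simp only [latticeEmbed]
  constructor <;> rintro ⟨h1, h2, h3⟩ <;> refine ⟨by exact_mod_cast h1, ?_, ?_⟩
  · exact_mod_cast h2
  · exact_mod_cast h3
  · exact_mod_cast h2
  · exact_mod_cast h3

lemma latmem_interior {aZ BZ cZ dZ : ℤ} (hB : 0 < BZ) (hd : 0 < dZ) (z : ℤ × ℤ) :
    latticeEmbed z ∈ interior (tri (aZ : ℝ) (BZ : ℝ) (cZ : ℝ) (dZ : ℝ)) ↔
      0 < z.2 ∧ (cZ - aZ) * z.2 < dZ * (z.1 - aZ) ∧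
        dZ * (z.1 - aZ) < BZ * (dZ - z.2) + (cZ - aZ) * z.2 := by
  rw [mem_interior_tri (by exact_mod_cast hB) (by exact_mod_cast hd)]
  simp only [latticeEmbed]
  constructor <;> rintro ⟨h1, h2, h3⟩ <;> refine ⟨by exact_mod_cast h1, ?_, ?_⟩
  · exact_mod_cast h2
  · exact_mod_cast h3
  · exact_mod_cast h2
  · exact_mod_cast h3

lemma latmem_frontier {aZ BZ cZ dZ : ℤ} (hB : 0 < BZ) (hd : 0 < dZ) (z : ℤ × ℤ) :
    latticeEmbed z ∈ frontier (tri (aZ : ℝ) (BZ : ℝ) (cZ : ℝ) (dZ : ℝ)) ↔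
      (0 ≤ z.2 ∧ (cZ - aZ) * z.2 ≤ dZ * (z.1 - aZ) ∧
        dZ * (z.1 - aZ) ≤ BZ * (dZ - z.2) + (cZ - aZ) * z.2) ∧
      ¬(0 < z.2 ∧ (cZ - aZ) * z.2 < dZ * (z.1 - aZ) ∧
        dZ * (z.1 - aZ) < BZ * (dZ - z.2) + (cZ - aZ) * z.2) := by
  rw [frontier_tri, mem_diff, latmem_tri hB hd, latmem_interior hB hd]

lemma frontier_lat_finite {aZ BZ cZ dZ : ℤ} (hB : 0 < BZ) (hd : 0 < dZ) :
    {z : ℤ × ℤ | latticeEmbed z ∈ frontier (tri (aZ : ℝ) (BZ : ℝ) (cZ : ℝ) (dZ : ℝ))}.Finite := by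
  apply Set.Finite.subset
    (Set.Finite.prod (Set.finite_Icc (aZ - |cZ - aZ|) (aZ + BZ + |cZ - aZ|)) (Set.finite_Icc 0 dZ))
  intro z hz
  rw [mem_setOf_eq, latmem_frontier hB hd] at hz
  obtain ⟨⟨h1, h2, h3⟩, -⟩ := hz
  have hyd : z.2 ≤ dZ := by nlinarith
  have habs1 : -(|cZ - aZ| * z.2) ≤ (cZ - aZ) * z.2 := by
    have := neg_abs_le (cZ - aZ)
    nlinarith
  have habs2 : (cZ - aZ) * z.2 ≤ |cZ - aZ| * z.2 := by
    have := le_abs_self (cZ - aZ)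
    nlinarith
  have habsd : |cZ - aZ| * z.2 ≤ |cZ - aZ| * dZ := by
    have := abs_nonneg (cZ - aZ)
    nlinarith
  have habsd0 : (0:ℤ) ≤ |cZ - aZ| * dZ := mul_nonneg (abs_nonneg _) hd.le
  constructor
  · simp only [mem_Icc]
    constructor
    · nlinarith
    · nlinarith
  · exact ⟨h1, hyd⟩

lemma frontier_ncard_ge {aZ BZ cZ dZ : ℤ} (hB : 3 ≤ BZ) (hd : 0 < dZ) :
    5 ≤ {z : ℤ × ℤ | latticeEmbed z ∈ frontier (tri (aZ : ℝ) (BZ : ℝ) (cZ : ℝ) (dZ : ℝ))}.ncard := by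
  classical
  have hB0 : 0 < BZ := by omega
  set T5 : Finset (ℤ × ℤ) :=
    insert (aZ, 0) (insert (aZ+1, 0) (insert (aZ+2, 0) (insert (aZ+3, 0) {(cZ, dZ)}))) with hT5
  have hcard : T5.card = 5 := by
    rw [hT5]
    rw [Finset.card_insert_of_notMem (by simp [Prod.ext_iff]; omega),
      Finset.card_insert_of_notMem (by simp [Prod.ext_iff]; omega),
      Finset.card_insert_of_notMem (by simp [Prod.ext_iff]; omega),
      Finset.card_insert_of_notMem (by simp [Prod.ext_iff]; omega),
      Finset.card_singleton]
  have hsub : ↑T5 ⊆ {z : ℤ × ℤ | latticeEmbed z ∈ frontier (tri (aZ : ℝ) (BZ : ℝ) (cZ : ℝ) (dZ : ℝ))} := by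
    intro z hz
    rw [hT5] at hz
    simp only [Finset.coe_insert, Finset.coe_singleton, mem_insert_iff, mem_singleton_iff] at hz
    rw [mem_setOf_eq, latmem_frontier hB0 hd]
    rcases hz with rfl | rfl | rfl | rfl | rfl <;>
      refine ⟨⟨by simp <;> omega, by simp <;> nlinarith, by simp <;> nlinarith⟩, ?_⟩ <;>
        rintro ⟨g1, g2, g3⟩ <;> simp only [] at g1 g2 g3 <;> nlinarith
  calc (5 : ℕ) = T5.card := hcard.symm
    _ = (↑T5 : Set (ℤ × ℤ)).ncard := (Set.ncard_coe_finset T5).symm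
    _ ≤ _ := Set.ncard_le_ncard hsub (frontier_lat_finite hB0 hd)

end Bridge

end Stmt18

open Stmt18 Set MeasureTheory

theorem stmt18 (b i : ℕ) (hb : 6 ≤ b) (hi : 3 ≤ i) (c d : ℤ) (hd : 0 < d)
    (hbd : {z : ℤ × ℤ | latticeEmbed z ∈ frontier (triZ (0, 0) ((b : ℤ) - 2, 0) (c, d))} =
      {z : ℤ × ℤ | z.2 = 0 ∧ 0 ≤ z.1 ∧ z.1 ≤ (b : ℤ) - 2} ∪ {(c, d)})
    (hint : {z : ℤ × ℤ | latticeEmbed z ∈ interior (triZ (0, 0) ((b : ℤ) - 2, 0) (c, d))}.ncard = i) :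
    ((b : ℤ) - 2) * d = 2 * (i : ℤ) + (b : ℤ) - 2 ∧ 2 ≤ d ∧
    2 * (MeasureTheory.volume (triZ (0, 0) ((b : ℤ) - 3, 0) (c, d))).toReal =
      ((((b : ℤ) - 3) * d : ℤ) : ℝ) ∧
    2 * (MeasureTheory.volume (triZ (1, 0) ((b : ℤ) - 2, 0) (c, d))).toReal =
      ((((b : ℤ) - 3) * d : ℤ) : ℝ) ∧
    7 ≤ ((b : ℤ) - 3) * d ∧
    (((∃ z : ℤ × ℤ, latticeEmbed z ∈ interior (triZ (0, 0) ((b : ℤ) - 3, 0) (c, d))) ∧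
        5 ≤ {z : ℤ × ℤ | latticeEmbed z ∈ frontier (triZ (0, 0) ((b : ℤ) - 3, 0) (c, d))}.ncard) ∨
      ((∃ z : ℤ × ℤ, latticeEmbed z ∈ interior (triZ (1, 0) ((b : ℤ) - 2, 0) (c, d))) ∧
        5 ≤ {z : ℤ × ℤ | latticeEmbed z ∈ frontier (triZ (1, 0) ((b : ℤ) - 2, 0) (c, d))}.ncard)) := by
  classical
  have hb6 : (6 : ℤ) ≤ (b : ℤ) := by exact_mod_cast hb
  have hB0 : (0 : ℤ) < (b : ℤ) - 2 := by omega
  have hB30 : (0 : ℤ) < (b : ℤ) - 3 := by omega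
  have etri : triZ (0, 0) ((b : ℤ) - 2, 0) (c, d) =
      tri ((0 : ℤ) : ℝ) ((((b : ℤ) - 2 : ℤ)) : ℝ) (c : ℝ) (d : ℝ) := by
    rw [triZ_eq, show ((b : ℤ) - 2 - 0 : ℤ) = (b : ℤ) - 2 from by ring]
  have e3 : triZ (0, 0) ((b : ℤ) - 3, 0) (c, d) =
      tri ((0 : ℤ) : ℝ) ((((b : ℤ) - 3 : ℤ)) : ℝ) (c : ℝ) (d : ℝ) := by
    rw [triZ_eq, show ((b : ℤ) - 3 - 0 : ℤ) = (b : ℤ) - 3 from by ring]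
  have e4 : triZ (1, 0) ((b : ℤ) - 2, 0) (c, d) =
      tri ((1 : ℤ) : ℝ) ((((b : ℤ) - 2 - 1 : ℤ)) : ℝ) (c : ℝ) (d : ℝ) := triZ_eq 1 _ c d
  -- D1 and D2
  have D1 : ∀ x y : ℤ, 0 < y → y < d → d * x ≠ c * y := by
    intro x y hy hyd heq
    have hmem : (x, y) ∈ {z : ℤ × ℤ |
        latticeEmbed z ∈ frontier (triZ (0, 0) ((b : ℤ) - 2, 0) (c, d))} := by
      rw [mem_setOf_eq, etri, latmem_frontier hB0 hd]
      constructor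
      · refine ⟨hy.le, ?_, ?_⟩ <;> simp only [sub_zero] <;> nlinarith
      · rintro ⟨g1, g2, g3⟩
        simp only [sub_zero] at g2
        nlinarith
    rw [hbd] at hmem
    rcases hmem with ⟨h0, -, -⟩ | h
    · simp only at h0; omega
    · simp only [mem_singleton_iff, Prod.mk.injEq] at h; omega
  have D2 : ∀ x y : ℤ, 0 < y → y < d → d * x ≠ (c - ((b : ℤ) - 2)) * y := by
    intro x y hy hyd heq
    have hmem : (x + ((b : ℤ) - 2), y) ∈ {z : ℤ × ℤ |
        latticeEmbed z ∈ frontier (triZ (0, 0) ((b : ℤ) - 2, 0) (c, d))} := by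
      rw [mem_setOf_eq, etri, latmem_frontier hB0 hd]
      constructor
      · refine ⟨hy.le, ?_, ?_⟩ <;> simp only [sub_zero] <;> nlinarith
      · rintro ⟨g1, g2, g3⟩
        simp only [sub_zero] at g3
        nlinarith
    rw [hbd] at hmem
    rcases hmem with ⟨h0, -, -⟩ | h
    · simp only at h0; omega
    · simp only [mem_singleton_iff, Prod.mk.injEq] at h; omega
  -- counting
  have hA : {z : ℤ × ℤ | latticeEmbed z ∈ interior (triZ (0, 0) ((b : ℤ) - 2, 0) (c, d))} =
      latA ((b : ℤ) - 2) c d := by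
    ext z
    rw [mem_setOf_eq, etri, latmem_interior hB0 hd]
    simp only [latA, mem_setOf_eq, sub_zero]
  have hAcard : (latA ((b : ℤ) - 2) c d).ncard = i := by rw [← hA]; exact hint
  have h2n := two_ncard_latA hB0 hd D1 D2
  rw [hAcard] at h2n
  have h2i : 2 * (i : ℤ) = (d - 1) * ((b : ℤ) - 2) := by
    have h1 : ((d - 1).toNat : ℤ) = d - 1 := Int.toNat_of_nonneg (by omega)
    have h2 : (((b : ℤ) - 2).toNat : ℤ) = (b : ℤ) - 2 := Int.toNat_of_nonneg (by omega)
    have hcast := congrArg (fun n : ℕ => (n : ℤ)) h2n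
    push_cast at hcast
    rw [h1, h2] at hcast
    exact_mod_cast hcast
  have hd2 : 2 ≤ d := by
    by_contra hlt
    have hde : d = 1 := by omega
    rw [hde] at h2i
    simp at h2i
    omega
  refine ⟨by linear_combination -h2i, hd2, ?_, ?_, ?_, ?_⟩
  · rw [e3, volume_tri (by exact_mod_cast hB30) (by exact_mod_cast hd)]
    rw [ENNReal.toReal_ofReal (by
      have h1 : (0 : ℝ) ≤ (((b : ℤ) - 3 : ℤ) : ℝ) := by exact_mod_cast hB30.le
      have h2 : (0 : ℝ) ≤ ((d : ℤ) : ℝ) := by exact_mod_cast hd.le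
      positivity)]
    push_cast
    ring
  · rw [e4, volume_tri (by exact_mod_cast (show (0:ℤ) < (b : ℤ) - 2 - 1 by omega))
      (by exact_mod_cast hd)]
    rw [ENNReal.toReal_ofReal (by
      have h1 : (0 : ℝ) ≤ (((b : ℤ) - 2 - 1 : ℤ) : ℝ) := by
        exact_mod_cast (show (0:ℤ) ≤ (b : ℤ) - 2 - 1 by omega)
      have h2 : (0 : ℝ) ≤ ((d : ℤ) : ℝ) := by exact_mod_cast hd.le
      positivity)]
    push_cast
    ring
  · rcases le_or_gt 5 ((b : ℤ) - 2) with h5 | h5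
    · have : (4 : ℤ) * 2 ≤ ((b : ℤ) - 3) * d :=
        mul_le_mul (by omega) hd2 (by omega) (by omega)
      omega
    · have hbeq : (b : ℤ) - 2 = 4 := by omega
      rw [hbeq] at h2i
      have hd3 : 3 ≤ d := by omega
      have hb3 : (b : ℤ) - 3 = 3 := by omega
      rw [hb3]
      omega
  · obtain ⟨z, hz⟩ : (latA ((b : ℤ) - 2) c d).Nonempty := by
      apply Set.nonempty_of_ncard_ne_zero
      rw [hAcard]
      omega
    have hzS := latA_subset_latS hB0 hd hz
    obtain ⟨hz1, hz2, hz3⟩ := hz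
    have hzd : z.2 < d := hzS.2.1
    have hfr1 : 5 ≤ {z : ℤ × ℤ |
        latticeEmbed z ∈ frontier (triZ (0, 0) ((b : ℤ) - 3, 0) (c, d))}.ncard := by
      simp only [e3]
      exact frontier_ncard_ge (by omega) hd
    have hfr2 : 5 ≤ {z : ℤ × ℤ |
        latticeEmbed z ∈ frontier (triZ (1, 0) ((b : ℤ) - 2, 0) (c, d))}.ncard := by
      simp only [e4]
      exact frontier_ncard_ge (by omega) hd
    rcases lt_or_ge (d * z.1) (c * z.2 + ((b : ℤ) - 3) * (d - z.2)) with hcase | hcase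
    · left
      refine ⟨⟨z, ?_⟩, hfr1⟩
      rw [e3, latmem_interior hB30 hd]
      refine ⟨hz1, ?_, ?_⟩ <;> simp only [sub_zero] <;> linarith
    · right
      refine ⟨⟨z, ?_⟩, hfr2⟩
      rw [e4, latmem_interior (show (0:ℤ) < (b : ℤ) - 2 - 1 by omega) hd]
      refine ⟨hz1, ?_, ?_⟩
      · nlinarith [mul_le_mul_of_nonneg_right (show (3:ℤ) ≤ (b : ℤ) - 3 by omega)
          (show (0:ℤ) ≤ d - z.2 by omega)]
      · nlinarith [hz3]
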